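/- arXiv:1706.03291 — 3 statements merged into one kernel-verified Lean document; each statement's English description precedes it below -/
import Mathlib

section
/- Let K and L be essentially small tt-categories with K rigid, let F : K → L be a tt-functor and φ = Spc(F) : Spc(L) → Spc(K) the induced map. Then the following are equivalent: (a) F is conservative, i.e. F detects isomorphisms (equivalently, F(x) ≅ 0 implies x ≅ 0); (b) φ is surjective on closed points, i.e. for every closed point P of Spc(K) there exists Q ∈ Spc(L) such that φ(Q) = P. -/
/-!
Basic notions of tensor-triangular geometry (Balmer), formalized from scratch:
tt-categories (pretriangulated + monoidal, with tensor exact in each variable),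
tt-ideals, prime tt-ideals, the Balmer spectrum `Spc` with its topology,
tensor powers of objects and morphisms, rigidity.
-/

open CategoryTheory Category Limits ZeroObject Pretriangulated MonoidalCategory

universe v u v' u'

namespace TT

variable (K : Type u) [Category.{v} K] [HasZeroObject K] [Preadditive K]
  [HasShift K ℤ] [∀ n : ℤ, (shiftFunctor K n).Additive] [Pretriangulated K]
  [MonoidalCategory K]

/-- The tensor is exact (triangulated) in each variable: tensoring a distinguished
triangle with an object (on either side) again yields a distinguished triangle. -/
def TensorExact : Prop :=
  ∀ (x : K) (T : Triangle K), (T ∈ distTriang K) →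
    (∃ h : x ⊗ T.obj₃ ⟶ (x ⊗ T.obj₁)⟦(1:ℤ)⟧,
      Triangle.mk (x ◁ T.mor₁) (x ◁ T.mor₂) h ∈ distTriang K) ∧
    (∃ h : T.obj₃ ⊗ x ⟶ (T.obj₁ ⊗ x)⟦(1:ℤ)⟧,
      Triangle.mk (T.mor₁ ▷ x) (T.mor₂ ▷ x) h ∈ distTriang K)

/-- Rigidity: every object `x` has a dual `x^∨`, i.e. takes part in an exact pairing
(coevaluation `η : 𝟙 ⟶ x^∨ ⊗ x` and evaluation `ε : x ⊗ x^∨ ⟶ 𝟙` satisfying the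
triangle identities, which yield the adjunction `x ⊗ - ⊣ x^∨ ⊗ -`). -/
def Rigid : Prop := ∀ x : K, ∃ xd : K, Nonempty (ExactPairing xd x)

variable {K}

/-- A tt-ideal: a (full, replete) class of objects closed under shifts, cones,
direct summands (retracts) and tensoring with arbitrary objects. -/
structure IsTTIdeal (I : Set K) : Prop where
  zero_mem : (0 : K) ∈ I
  shift_mem : ∀ (n : ℤ), ∀ x ∈ I, (x⟦n⟧ : K) ∈ I
  cone_mem : ∀ T : Triangle K, (T ∈ distTriang K) → T.obj₁ ∈ I → T.obj₂ ∈ I → T.obj₃ ∈ I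
  retract_mem : ∀ x z : K, z ∈ I → ∀ (i : x ⟶ z) (r : z ⟶ x), i ≫ r = 𝟙 x → x ∈ I
  tensor_mem : ∀ x ∈ I, ∀ y : K, x ⊗ y ∈ I
  tensor_mem' : ∀ x ∈ I, ∀ y : K, y ⊗ x ∈ I

/-- A prime tt-ideal: a proper tt-ideal `P` such that `x ⊗ y ∈ P` implies
`x ∈ P` or `y ∈ P`. -/
structure IsPrimeTTIdeal (P : Set K) extends IsTTIdeal P : Prop where
  ne_univ : P ≠ Set.univ
  mem_or_mem : ∀ x y : K, x ⊗ y ∈ P → x ∈ P ∨ y ∈ P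

variable (K) in
/-- The Balmer spectrum: the set of prime tt-ideals. -/
def Spc := {P : Set K // IsPrimeTTIdeal P}

/-- The Balmer topology on `Spc K`, generated by the basic open subsets
`U(x) = {P ∈ Spc K | x ∈ P}`. -/
instance : TopologicalSpace (Spc K) :=
  TopologicalSpace.generateFrom {U | ∃ x : K, U = {P : Spc K | x ∈ P.1}}

/-- The tt-ideal `⟨E⟩` generated by a class of objects `E`. -/
def ttIdealGen (E : Set K) : Set K := ⋂₀ {I : Set K | IsTTIdeal I ∧ E ⊆ I}

/-- `n`-fold tensor power of an object (`x^⊗0 = 𝟙`). -/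
def opow (x : K) : ℕ → K
  | 0 => 𝟙_ K
  | n + 1 => opow x n ⊗ x

/-- `n`-fold tensor power `f^⊗n` of a morphism. -/
def mpow {x y : K} (f : x ⟶ y) : ∀ n : ℕ, (opow x n ⟶ opow y n)
  | 0 => 𝟙 _
  | n + 1 => mpow f n ⊗ₘ f

end TT
section Lemmas

namespace TT

variable {C : Type u} [Category.{v} C] [HasZeroObject C] [Preadditive C]
  [HasShift C ℤ] [∀ n : ℤ, (shiftFunctor C n).Additive] [Pretriangulated C]
  [MonoidalCategory C]

lemma IsTTIdeal.mem_of_iso {I : Set C} (hI : IsTTIdeal I) {x z : C} (e : x ≅ z)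
    (hz : z ∈ I) : x ∈ I :=
  hI.retract_mem x z hz e.hom e.inv e.hom_inv_id

lemma IsTTIdeal.isZero_mem {I : Set C} (hI : IsTTIdeal I) {x : C} (hx : IsZero x) : x ∈ I :=
  hI.mem_of_iso hx.isoZero hI.zero_mem

lemma isTTIdeal_univ : IsTTIdeal (Set.univ : Set C) := by
  constructor <;> intros <;> trivial

lemma isTTIdeal_sInter {S : Set (Set C)} (hS : ∀ I ∈ S, IsTTIdeal I) :
    IsTTIdeal (⋂₀ S) where
  zero_mem := fun I hI => (hS I hI).zero_mem
  shift_mem := fun n x hx I hI => (hS I hI).shift_mem n x (hx I hI)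
  cone_mem := fun T hT h1 h2 I hI => (hS I hI).cone_mem T hT (h1 I hI) (h2 I hI)
  retract_mem := fun x z hz i r hir I hI => (hS I hI).retract_mem x z (hz I hI) i r hir
  tensor_mem := fun x hx y I hI => (hS I hI).tensor_mem x (hx I hI) y
  tensor_mem' := fun x hx y I hI => (hS I hI).tensor_mem' x (hx I hI) y

lemma isTTIdeal_ttIdealGen (E : Set C) : IsTTIdeal (ttIdealGen E) :=
  isTTIdeal_sInter (fun _ hI => hI.1)

lemma subset_ttIdealGen (E : Set C) : E ⊆ ttIdealGen E :=
  fun _ hx _ hI => hI.2 hx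

lemma ttIdealGen_subset {E I : Set C} (hI : IsTTIdeal I) (hEI : E ⊆ I) :
    ttIdealGen E ⊆ I := fun _ hx => hx I ⟨hI, hEI⟩

lemma IsTTIdeal.eq_univ_of_unit_mem {I : Set C} (hI : IsTTIdeal I) (h : 𝟙_ C ∈ I) :
    I = Set.univ :=
  Set.eq_univ_of_forall fun y => hI.mem_of_iso (λ_ y).symm (hI.tensor_mem _ h y)

lemma IsPrimeTTIdeal.unit_not_mem {P : Set C} (hP : IsPrimeTTIdeal P) : 𝟙_ C ∉ P :=
  fun h => hP.ne_univ (hP.toIsTTIdeal.eq_univ_of_unit_mem h)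

lemma isTTIdeal_sUnion_chain {S : Set (Set C)} (hS : ∀ I ∈ S, IsTTIdeal I)
    (hchain : IsChain (· ⊆ ·) S) (hne : S.Nonempty) : IsTTIdeal (⋃₀ S) where
  zero_mem := hne.elim fun I hI => ⟨I, hI, (hS I hI).zero_mem⟩
  shift_mem := fun n x ⟨I, hI, hxI⟩ => ⟨I, hI, (hS I hI).shift_mem n x hxI⟩
  cone_mem := fun T hT ⟨I, hI, h1⟩ ⟨J, hJ, h2⟩ => by
    rcases hchain.total hI hJ with h | h
    · exact ⟨J, hJ, (hS J hJ).cone_mem T hT (h h1) h2⟩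
    · exact ⟨I, hI, (hS I hI).cone_mem T hT h1 (h h2)⟩
  retract_mem := fun x z ⟨I, hI, hz⟩ i r hir => ⟨I, hI, (hS I hI).retract_mem x z hz i r hir⟩
  tensor_mem := fun x ⟨I, hI, hx⟩ y => ⟨I, hI, (hS I hI).tensor_mem x hx y⟩
  tensor_mem' := fun x ⟨I, hI, hx⟩ y => ⟨I, hI, (hS I hI).tensor_mem' x hx y⟩

section Exact

variable (hK : TensorExact C)
include hK

lemma isZero_tensor_right {z : C} (hz : IsZero z) (x : C) : IsZero (x ⊗ z) := by
  obtain ⟨h, hdist⟩ := (hK x (contractibleTriangle z) (contractible_distinguished z)).1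
  have h0 : IsZero (x ⊗ (0 : C)) := by
    refine Triangle.isZero₃_of_isIso₁ _ hdist ?_
    show IsIso (x ◁ 𝟙 z)
    rw [MonoidalCategory.whiskerLeft_id]
    infer_instance
  exact h0.of_iso (whiskerLeftIso x hz.isoZero)

lemma isZero_tensor_left {z : C} (hz : IsZero z) (x : C) : IsZero (z ⊗ x) := by
  obtain ⟨h, hdist⟩ := (hK x (contractibleTriangle z) (contractible_distinguished z)).2
  have h0 : IsZero ((0 : C) ⊗ x) := by
    refine Triangle.isZero₃_of_isIso₁ _ hdist ?_
    show IsIso (𝟙 z ▷ x)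
    rw [MonoidalCategory.id_whiskerRight]
    infer_instance
  exact h0.of_iso (whiskerRightIso hz.isoZero x)

/-- From exactness: `z⟦1⟧ ⊗ c ≅ (z ⊗ c)⟦1⟧` (non-canonically). -/
lemma shiftOne_tensor_iso (z c : C) :
    Nonempty ((z⟦(1:ℤ)⟧ ⊗ c) ≅ ((z ⊗ c)⟦(1:ℤ)⟧)) := by
  have hT := rot_of_distTriang _ (contractible_distinguished z)
  obtain ⟨h, hdist⟩ := (hK c _ hT).2
  have hmid : IsZero ((contractibleTriangle z).rotate.obj₂ ⊗ c) := by
    refine isZero_tensor_left hK ?_ c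
    exact isZero_zero C
  have hiso : IsIso h := (Triangle.isZero₂_iff_isIso₃ _ hdist).1 hmid
  exact ⟨@asIso _ _ _ _ h hiso⟩

lemma IsTTIdeal.shiftUp_tensor_mem {I : Set C} (hI : IsTTIdeal I) {z c : C}
    (h : z ⊗ c ∈ I) : (z⟦(1:ℤ)⟧ ⊗ c) ∈ I := by
  obtain ⟨e⟩ := shiftOne_tensor_iso hK z c
  exact hI.mem_of_iso e (hI.shift_mem 1 _ h)

lemma IsTTIdeal.shiftDown_tensor_mem {I : Set C} (hI : IsTTIdeal I) {z c : C}
    (h : z ⊗ c ∈ I) : (z⟦(-1:ℤ)⟧ ⊗ c) ∈ I := by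
  obtain ⟨e⟩ := shiftOne_tensor_iso hK (z⟦(-1:ℤ)⟧) c
  -- e : z⟦-1⟧⟦1⟧ ⊗ c ≅ (z⟦-1⟧ ⊗ c)⟦1⟧
  have e2 : (z⟦(-1:ℤ)⟧⟦(1:ℤ)⟧ : C) ≅ z :=
    (shiftFunctorCompIsoId C (-1:ℤ) (1:ℤ) (by ring)).app z
  have e3 : ((z⟦(-1:ℤ)⟧ ⊗ c)⟦(1:ℤ)⟧ : C) ≅ z ⊗ c := e.symm ≪≫ whiskerRightIso e2 c
  have e4 : (z⟦(-1:ℤ)⟧ ⊗ c) ≅ ((z⟦(-1:ℤ)⟧ ⊗ c)⟦(1:ℤ)⟧)⟦(-1:ℤ)⟧ :=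
    ((shiftFunctorCompIsoId C (1:ℤ) (-1:ℤ) (by ring)).app (z⟦(-1:ℤ)⟧ ⊗ c)).symm
  refine hI.mem_of_iso (e4 ≪≫ (shiftFunctor C (-1:ℤ)).mapIso e3) ?_
  exact hI.shift_mem (-1) _ h

lemma IsTTIdeal.shift_tensor_mem {I : Set C} (hI : IsTTIdeal I) (n : ℤ) {z c : C}
    (h : z ⊗ c ∈ I) : (z⟦n⟧ ⊗ c) ∈ I := by
  induction n using Int.induction_on with
  | zero =>
      exact hI.mem_of_iso (whiskerRightIso ((shiftFunctorZero C ℤ).app z) c) h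
  | succ n ih =>
      have := hI.shiftUp_tensor_mem hK ih
      refine hI.mem_of_iso (whiskerRightIso ?_ c) this
      exact (shiftFunctorAdd' C (n : ℤ) 1 ((n : ℤ) + 1) rfl).app z
  | pred n ih =>
      have := hI.shiftDown_tensor_mem hK ih
      refine hI.mem_of_iso (whiskerRightIso ?_ c) this
      exact (shiftFunctorAdd' C (-(n : ℤ)) (-1) (-(n : ℤ) - 1) (by ring)).app z

variable [SymmetricCategory C]

lemma isTTIdeal_residual {J : Set C} (hJ : IsTTIdeal J) (c : C) :
    IsTTIdeal {z : C | z ⊗ c ∈ J} where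
  zero_mem := hJ.isZero_mem (isZero_tensor_left hK (isZero_zero C) c)
  shift_mem := fun n z hz => hJ.shift_tensor_mem hK n hz
  cone_mem := fun T hT h1 h2 => by
    obtain ⟨h, hd⟩ := (hK c T hT).2
    exact hJ.cone_mem _ hd h1 h2
  retract_mem := fun x z hz i r hir =>
    hJ.retract_mem (x ⊗ c) (z ⊗ c) hz (i ▷ c) (r ▷ c)
      (by rw [← MonoidalCategory.comp_whiskerRight, hir, MonoidalCategory.id_whiskerRight])
  tensor_mem := fun z hz y =>
    hJ.mem_of_iso ((α_ z y c) ≪≫ whiskerLeftIso z (β_ y c) ≪≫ (α_ z c y).symm)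
      (hJ.tensor_mem _ hz y)
  tensor_mem' := fun z hz y =>
    hJ.mem_of_iso (α_ y z c) (hJ.tensor_mem' _ hz y)

/-- The key Zorn argument: a maximal tt-ideal disjoint from a ⊗-multiplicative set of
nonzero objects is prime. -/
lemma exists_prime_disjoint (S : Set C)
    (hunit : 𝟙_ C ∈ S) (hmul : ∀ a ∈ S, ∀ b ∈ S, a ⊗ b ∈ S)
    (hnz : ∀ s ∈ S, ¬ IsZero s) :
    ∃ P : Set C, IsPrimeTTIdeal P ∧ ∀ s ∈ S, s ∉ P := by
  set Z : Set (Set C) := {I | IsTTIdeal I ∧ ∀ s ∈ S, s ∉ I} with hZ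
  have hzero : {z : C | IsZero z} ∈ Z := by
    refine ⟨⟨isZero_zero C, fun n x hx => (shiftFunctor C n).map_isZero hx,
      fun T hT h1 h2 => Triangle.isZero₃_of_isZero₁₂ T hT h1 h2, ?_,
      fun x hx y => isZero_tensor_left hK hx y,
      fun x hx y => isZero_tensor_right hK hx y⟩,
      fun s hs hzs => hnz s hs hzs⟩
    intro x z hz i r hir
    have hz' : IsZero z := hz
    show IsZero x
    rw [IsZero.iff_id_eq_zero, ← hir, hz'.eq_of_tgt i 0, zero_comp]
  have hchains : ∀ c ⊆ Z, IsChain (· ⊆ ·) c → c.Nonempty →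
      ∃ ub ∈ Z, ∀ s ∈ c, s ⊆ ub := by
    intro c hcZ hchain hcne
    refine ⟨⋃₀ c, ⟨isTTIdeal_sUnion_chain (fun I hI => (hcZ hI).1) hchain hcne, ?_⟩,
      fun I hI => Set.subset_sUnion_of_mem hI⟩
    rintro s hs ⟨I, hI, hsI⟩
    exact (hcZ hI).2 s hs hsI
  obtain ⟨M, -, hmax⟩ := zorn_subset_nonempty Z hchains _ hzero
  have hM : IsTTIdeal M := hmax.prop.1
  have hMS : ∀ s ∈ S, s ∉ M := hmax.prop.2
  refine ⟨M, ⟨hM, ?_, ?_⟩, hMS⟩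
  · intro h
    exact hMS _ hunit (h ▸ Set.mem_univ _)
  · intro a b hab
    by_contra hcon
    push_neg at hcon
    obtain ⟨ha, hb⟩ := hcon
    -- the ideal generated by M and a (resp. b) must meet S
    have key : ∀ d : C, d ∉ M → ∃ s ∈ S, s ∈ ttIdealGen (M ∪ {d}) := by
      intro d hd
      by_contra hno
      push_neg at hno
      have hmem : ttIdealGen (M ∪ {d}) ∈ Z :=
        ⟨isTTIdeal_ttIdealGen _, fun s hs => hno s hs⟩
      have hsub : M ⊆ ttIdealGen (M ∪ {d}) :=
        Set.Subset.trans Set.subset_union_left (subset_ttIdealGen _)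
      have : ttIdealGen (M ∪ {d}) ⊆ M := hmax.2 hmem hsub
      exact hd (this (subset_ttIdealGen _ (Set.mem_union_right _ rfl)))
    obtain ⟨s, hsS, hsIa⟩ := key a ha
    obtain ⟨t, htS, htIb⟩ := key b hb
    -- step 1 : for u ∈ ⟨M,a⟩ and v ∈ M ∪ {b}, u ⊗ v ∈ M
    have step1 : ∀ u ∈ ttIdealGen (M ∪ {a}), ∀ v ∈ (M ∪ {b} : Set C), u ⊗ v ∈ M := by
      intro u hu v hv
      refine ttIdealGen_subset (I := {z : C | z ⊗ v ∈ M}) (isTTIdeal_residual hK hM v) ?_ hu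
      rintro m (hm | rfl)
      · rcases hv with hvM | rfl
        · exact hM.tensor_mem m hm v
        · exact hM.tensor_mem m hm v
      · rcases hv with hvM | rfl
        · exact hM.tensor_mem' v hvM m
        · exact hab
    -- step 2 : for u ∈ ⟨M,a⟩ and v ∈ ⟨M,b⟩, u ⊗ v ∈ M
    have step2 : ∀ u ∈ ttIdealGen (M ∪ {a}), ∀ v ∈ ttIdealGen (M ∪ {b}), u ⊗ v ∈ M := by
      intro u hu v hv
      have hset : {v : C | u ⊗ v ∈ M} = {v : C | v ⊗ u ∈ M} := by
        ext w
        exact ⟨fun h => hM.mem_of_iso (β_ w u) h, fun h => hM.mem_of_iso (β_ u w) h⟩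
      refine ttIdealGen_subset (I := {z : C | u ⊗ z ∈ M}) ?_ ?_ hv
      · rw [hset]; exact isTTIdeal_residual hK hM u
      · rintro m (hm | rfl)
        · exact hM.tensor_mem' m hm u
        · exact step1 u hu m (Set.mem_union_right _ rfl)
    have : s ⊗ t ∈ M := step2 s hsIa t htIb
    exact hMS _ (hmul s hsS t htS) this

end Exact

section Powers

variable [SymmetricCategory C]

lemma opow_add_iso (x : C) (n m : ℕ) : Nonempty (opow x (n + m) ≅ opow x n ⊗ opow x m) := by
  induction m with
  | zero => exact ⟨(ρ_ (opow x n)).symm⟩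
  | succ m ih =>
      obtain ⟨e⟩ := ih
      exact ⟨whiskerRightIso e x ≪≫ α_ (opow x n) (opow x m) x⟩

variable (hK : TensorExact C)
include hK

lemma isZero_of_isZero_tensor_unit {x : C} (h : IsZero (𝟙_ C)) : IsZero x :=
  (isZero_tensor_right hK h x).of_iso (ρ_ x).symm

/-- Rigidity cancellation: if `(y ⊗ x) ⊗ x ≅ 0` then `y ⊗ x ≅ 0`. -/
lemma isZero_cancel {x xd : C} (hp : ExactPairing xd x) (y : C)
    (h : IsZero ((y ⊗ x) ⊗ x)) : IsZero (y ⊗ x) := by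
  letI := hp
  set i : x ⟶ (x ⊗ xd) ⊗ x := (ρ_ x).inv ≫ (x ◁ η_ xd x) ≫ (α_ x xd x).inv with hi
  set r : (x ⊗ xd) ⊗ x ⟶ x := (ε_ xd x ▷ x) ≫ (λ_ x).hom with hr
  have hir : i ≫ r = 𝟙 x := by
    rw [hi, hr]
    simp
  have hz : IsZero (y ⊗ ((x ⊗ xd) ⊗ x)) := by
    refine (isZero_tensor_left hK h xd).of_iso ?_
    exact whiskerLeftIso y (β_ (x ⊗ xd) x) ≪≫ (α_ y x (x ⊗ xd)).symm ≪≫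
      (α_ (y ⊗ x) x xd).symm
  rw [IsZero.iff_id_eq_zero]
  have : (y ◁ i) ≫ (y ◁ r) = 𝟙 (y ⊗ x) := by
    rw [← MonoidalCategory.whiskerLeft_comp, hir, MonoidalCategory.whiskerLeft_id]
  rw [← this, hz.eq_of_tgt (y ◁ i) 0, zero_comp]

lemma not_isZero_opow (hrigid : Rigid C) {x : C} (hx : ¬ IsZero x) (n : ℕ) :
    ¬ IsZero (opow x n) := by
  obtain ⟨xd, ⟨hp⟩⟩ := hrigid x
  have main : ∀ m : ℕ, IsZero (opow x (m + 1)) → IsZero x := by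
    intro m
    induction m with
    | zero => exact fun h => h.of_iso (λ_ x).symm
    | succ m ih => exact fun h => ih (isZero_cancel hK hp (opow x m) h)
  cases n with
  | zero => exact fun h => hx (isZero_of_isZero_tensor_unit hK h)
  | succ n => exact fun h => hx (main n h)

end Powers

section SpcTopoloy

lemma spc_open_mono {U : Set (Spc C)} (hU : IsOpen U) {P Q : Spc C}
    (hPQ : P.1 ⊆ Q.1) (hP : P ∈ U) : Q ∈ U := by
  have hU' : TopologicalSpace.GenerateOpen
      {U | ∃ x : C, U = {P : Spc C | x ∈ P.1}} U := hU
  clear hU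
  induction hU' with
  | basic u hu =>
      obtain ⟨x, rfl⟩ := hu
      exact hPQ hP
  | univ => trivial
  | inter u v _ _ ihu ihv => exact ⟨ihu hP.1, ihv hP.2⟩
  | sUnion s _ ih =>
      obtain ⟨u, hu, hPu⟩ := hP
      exact ⟨u, hu, ih u hu hPu⟩

lemma closed_point_minimal {P : Spc C} (h : IsClosed ({P} : Set (Spc C)))
    {Q : Spc C} (hQ : Q.1 ⊆ P.1) : Q = P := by
  by_contra hne
  have hQc : Q ∈ ({P}ᶜ : Set (Spc C)) := by simpa using hne
  have := spc_open_mono h.isOpen_compl hQ hQc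
  simp at this

lemma isClosed_singleton_of_minimal {P : Spc C}
    (hmin : ∀ Q : Spc C, Q.1 ⊆ P.1 → Q = P) : IsClosed ({P} : Set (Spc C)) := by
  rw [← isOpen_compl_iff]
  have : ({P}ᶜ : Set (Spc C)) = ⋃ x ∈ {x : C | x ∉ P.1}, {Q : Spc C | x ∈ Q.1} := by
    ext Q
    simp only [Set.mem_compl_iff, Set.mem_singleton_iff, Set.mem_iUnion, Set.mem_setOf_eq]
    constructor
    · intro hne
      by_contra hcon
      push_neg at hcon
      refine hne (hmin Q ?_)
      intro x hx
      by_contra hxP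
      exact hcon x hxP hx
    · rintro ⟨x, hxP, hxQ⟩ rfl
      exact hxP hxQ
  rw [this]
  exact isOpen_biUnion fun x _ =>
    TopologicalSpace.isOpen_generateFrom_of_mem ⟨x, rfl⟩

lemma isPrime_sInter_chain {S : Set (Set C)} (hS : ∀ A ∈ S, IsPrimeTTIdeal A)
    (hchain : IsChain (· ⊆ ·) S) (hne : S.Nonempty) : IsPrimeTTIdeal (⋂₀ S) := by
  refine ⟨isTTIdeal_sInter (fun A hA => (hS A hA).toIsTTIdeal), ?_, ?_⟩
  · obtain ⟨A, hA⟩ := hne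
    intro h
    have h1 : 𝟙_ C ∈ ⋂₀ S := h ▸ Set.mem_univ (𝟙_ C)
    exact (hS A hA).unit_not_mem (Set.mem_sInter.1 h1 A hA)
  · intro x y hxy
    by_contra hcon
    push_neg at hcon
    obtain ⟨hx, hy⟩ := hcon
    simp only [Set.mem_sInter, not_forall] at hx hy
    obtain ⟨A, hA, hxA⟩ := hx
    obtain ⟨B, hB, hyB⟩ := hy
    rcases hchain.total hA hB with h | h
    · rcases (hS A hA).mem_or_mem x y (hxy A hA) with hxa | hya
      · exact hxA hxa
      · exact hyB (h hya)
    · rcases (hS B hB).mem_or_mem x y (hxy B hB) with hxb | hyb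
      · exact hxA (h hxb)
      · exact hyB hyb

lemma exists_minimal_prime (P : Spc C) :
    ∃ P₀ : Spc C, P₀.1 ⊆ P.1 ∧ ∀ Q : Spc C, Q.1 ⊆ P₀.1 → Q = P₀ := by
  have hchains : ∀ c ⊆ {A : Set C | IsPrimeTTIdeal A ∧ A ⊆ P.1},
      IsChain (· ⊆ ·) c → c.Nonempty →
      ∃ lb ∈ {A : Set C | IsPrimeTTIdeal A ∧ A ⊆ P.1}, ∀ s ∈ c, lb ⊆ s := by
    intro c hcS hchain hcne
    refine ⟨⋂₀ c, ⟨isPrime_sInter_chain (fun A hA => (hcS hA).1) hchain hcne, ?_⟩,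
      fun A hA => Set.sInter_subset_of_mem hA⟩
    obtain ⟨A, hA⟩ := hcne
    exact (Set.sInter_subset_of_mem hA).trans (hcS hA).2
  obtain ⟨m, hmP, hmin⟩ := zorn_superset_nonempty
    {A : Set C | IsPrimeTTIdeal A ∧ A ⊆ P.1} hchains P.1 ⟨P.2, subset_rfl⟩
  refine ⟨⟨m, hmin.prop.1⟩, hmin.prop.2, ?_⟩
  intro Q hQ
  have hQS : Q.1 ∈ {A : Set C | IsPrimeTTIdeal A ∧ A ⊆ P.1} :=
    ⟨Q.2, hQ.trans hmin.prop.2⟩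
  have := hmin.2 hQS hQ
  exact Subtype.ext (le_antisymm hQ this)

end SpcTopoloy

end TT

end Lemmas

open TT

variable {K : Type u} [Category.{v} K] [HasZeroObject K] [Preadditive K]
  [HasShift K ℤ] [∀ n : ℤ, (shiftFunctor K n).Additive] [Pretriangulated K]
  [MonoidalCategory K] [SymmetricCategory K] [EssentiallySmall.{v} K]
variable {L : Type u'} [Category.{v'} L] [HasZeroObject L] [Preadditive L]
  [HasShift L ℤ] [∀ n : ℤ, (shiftFunctor L n).Additive] [Pretriangulated L]
  [MonoidalCategory L] [SymmetricCategory L] [EssentiallySmall.{v'} L]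

section FunctorLemmas

variable (F : K ⥤ L) [F.CommShift ℤ] [F.IsTriangulated] [F.Monoidal]

lemma isZero_F_zero : IsZero (F.obj (0 : K)) := by
  have hd := F.map_distinguished _ (contractible_distinguished (0 : K))
  refine Triangle.isZero₃_of_isIso₁ _ hd ?_
  show IsIso (F.map (𝟙 (0 : K)))
  rw [F.map_id]
  infer_instance

lemma preimage_isPrime (Q : Spc L) : IsPrimeTTIdeal {x : K | F.obj x ∈ Q.1} := by
  have hQ := Q.2
  refine ⟨⟨?_, ?_, ?_, ?_, ?_, ?_⟩, ?_, ?_⟩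
  · exact hQ.toIsTTIdeal.isZero_mem (isZero_F_zero F)
  · intro n x hx
    exact hQ.toIsTTIdeal.mem_of_iso ((F.commShiftIso n).app x)
      (hQ.toIsTTIdeal.shift_mem n _ hx)
  · intro T hT h1 h2
    exact hQ.toIsTTIdeal.cone_mem _ (F.map_distinguished T hT) h1 h2
  · intro x z hz i r hir
    exact hQ.toIsTTIdeal.retract_mem (F.obj x) (F.obj z) hz (F.map i) (F.map r)
      (by rw [← F.map_comp, hir, F.map_id])
  · intro x hx y
    exact hQ.toIsTTIdeal.mem_of_iso (Functor.Monoidal.μIso F x y).symm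
      (hQ.toIsTTIdeal.tensor_mem _ hx (F.obj y))
  · intro x hx y
    exact hQ.toIsTTIdeal.mem_of_iso (Functor.Monoidal.μIso F y x).symm
      (hQ.toIsTTIdeal.tensor_mem' _ hx (F.obj y))
  · intro h
    have h1 : F.obj (𝟙_ K) ∈ Q.1 := by
      have : (𝟙_ K) ∈ {x : K | F.obj x ∈ Q.1} := by rw [h]; trivial
      exact this
    exact hQ.unit_not_mem (hQ.toIsTTIdeal.mem_of_iso (Functor.Monoidal.εIso F) h1)
  · intro x y h
    exact hQ.mem_or_mem _ _ (hQ.toIsTTIdeal.mem_of_iso (Functor.Monoidal.μIso F x y) h)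

end FunctorLemmas

/-- **Theorem (Balmer).** Let `K`, `L` be essentially small tt-categories with `K` rigid
and `F : K ⥤ L` a tt-functor. Then `F` is conservative (detects isomorphisms) if and
only if the induced map `φ = Spc F : Spc L → Spc K`, `Q ↦ F⁻¹(Q)`, is surjective on
closed points. -/
theorem conservative_iff_surjective_on_closed_points
    (hK : TensorExact K) (hL : TensorExact L) (hrigid : Rigid K)
    (F : K ⥤ L) [F.CommShift ℤ] [F.IsTriangulated] [F.Monoidal] :
    (∀ ⦃x y : K⦄ (f : x ⟶ y), IsIso (F.map f) → IsIso f) ↔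
      (∀ P : Spc K, IsClosed ({P} : Set (Spc K)) →
        ∃ Q : Spc L, {x : K | F.obj x ∈ Q.1} = P.1) := by
  constructor
  · intro hcons P hPclosed
    set S : Set L := {y : L | ∃ s : K, s ∉ P.1 ∧ Nonempty (y ≅ F.obj s)} with hSdef
    have hunit : 𝟙_ L ∈ S := ⟨𝟙_ K, P.2.unit_not_mem, ⟨Functor.Monoidal.εIso F⟩⟩
    have hmul : ∀ a ∈ S, ∀ b ∈ S, a ⊗ b ∈ S := by
      rintro a ⟨s, hs, ⟨e⟩⟩ b ⟨t, ht, ⟨e'⟩⟩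
      refine ⟨s ⊗ t, fun hmem => ?_, ⟨tensorIso e e' ≪≫ Functor.Monoidal.μIso F s t⟩⟩
      rcases P.2.mem_or_mem s t hmem with hst | hst
      exacts [hs hst, ht hst]
    have hnz : ∀ s ∈ S, ¬ IsZero s := by
      rintro w ⟨s, hs, ⟨e⟩⟩ hw
      have hFs : IsZero (F.obj s) := hw.of_iso e.symm
      have h0 : IsZero (F.obj (0 : K)) := isZero_F_zero F
      have hiso : IsIso (0 : s ⟶ (0 : K)) :=
        hcons (0 : s ⟶ (0 : K)) ⟨0, hFs.eq_of_src _ _, h0.eq_of_src _ _⟩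
      exact hs (P.2.toIsTTIdeal.isZero_mem
        ((isZero_zero K).of_iso (@asIso _ _ _ _ _ hiso)))
    obtain ⟨Q0, hQ0, hQ0S⟩ := exists_prime_disjoint hL S hunit hmul hnz
    refine ⟨⟨Q0, hQ0⟩, ?_⟩
    have hsub : {x : K | F.obj x ∈ Q0} ⊆ P.1 := by
      intro x hx
      by_contra hxP
      exact hQ0S (F.obj x) ⟨x, hxP, ⟨Iso.refl _⟩⟩ hx
    have heq := closed_point_minimal hPclosed
      (Q := ⟨_, preimage_isPrime F (⟨Q0, hQ0⟩ : Spc L)⟩) hsub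
    exact congrArg Subtype.val heq
  · intro hsurj x y f hFf
    obtain ⟨z, g, h, hT⟩ := distinguished_cocone_triangle f
    have hFz : IsZero (F.obj z) := by
      refine Triangle.isZero₃_of_isIso₁ _ (F.map_distinguished _ hT) ?_
      dsimp [Functor.mapTriangle]
      exact hFf
    have hz : IsZero z := by
      by_contra hz
      set S : Set K := {w : K | ∃ n : ℕ, Nonempty (w ≅ opow z n)} with hSdef
      have hunit : 𝟙_ K ∈ S := ⟨0, ⟨Iso.refl _⟩⟩
      have hmul : ∀ a ∈ S, ∀ b ∈ S, a ⊗ b ∈ S := by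
        rintro a ⟨n, ⟨e⟩⟩ b ⟨m, ⟨e'⟩⟩
        obtain ⟨e''⟩ := opow_add_iso z n m
        exact ⟨n + m, ⟨tensorIso e e' ≪≫ e''.symm⟩⟩
      have hnz : ∀ s ∈ S, ¬ IsZero s := by
        rintro w ⟨n, ⟨e⟩⟩ hw
        exact not_isZero_opow hK hrigid hz n (hw.of_iso e.symm)
      obtain ⟨P1, hP1, hP1S⟩ := exists_prime_disjoint hK S hunit hmul hnz
      have hzP1 : z ∉ P1 := hP1S z ⟨1, ⟨(λ_ z).symm⟩⟩
      obtain ⟨P₀, hP₀sub, hP₀min⟩ := exists_minimal_prime (⟨P1, hP1⟩ : Spc K)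
      obtain ⟨Q, hQ⟩ := hsurj P₀ (isClosed_singleton_of_minimal hP₀min)
      have hzmem : z ∈ P₀.1 := by
        rw [← hQ]
        exact Q.2.toIsTTIdeal.isZero_mem hFz
      exact hzP1 (hP₀sub hzmem)
    exact (Triangle.isZero₃_iff_isIso₁ _ hT).1 hz
end

section
/- Let K be a tt-category (not necessarily rigid) and let f : x → y be a morphism in K. Then the class of objects {z ∈ K : f is ⊗-nilpotent on z} = {z ∈ K : f^⊗n ⊗ z = 0 for some n ≥ 1} forms a tt-ideal of K; in particular it is closed under cones: if z₁ → z₂ → z₃ → Σz₁ is a distinguished triangle and f is ⊗-nilpotent on z₁ and on z₂, then f is ⊗-nilpotent on z₃. -/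
/-!
Basic notions of tensor-triangular geometry (Balmer), formalized from scratch:
tt-categories (pretriangulated + monoidal, with tensor exact in each variable),
tt-ideals, prime tt-ideals, the Balmer spectrum `Spc` with its topology,
tensor powers of objects and morphisms, rigidity.
-/

open CategoryTheory Category Limits ZeroObject Pretriangulated MonoidalCategory

universe v u v' u'

open TT

variable {K : Type u} [Category.{v} K] [HasZeroObject K] [Preadditive K]
  [HasShift K ℤ] [∀ n : ℤ, (shiftFunctor K n).Additive] [Pretriangulated K]
  [MonoidalCategory K] [SymmetricCategory K] [EssentiallySmall.{v} K]

section Aux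

variable (hK : TensorExact K)
include hK

lemma aux_isZero_zero_tensor (c : K) : IsZero ((0 : K) ⊗ c) := by
  obtain ⟨h, hT⟩ := (hK c (contractibleTriangle (𝟙_ K)) (contractible_distinguished _)).2
  refine Pretriangulated.Triangle.isZero₃_of_isIso₁ _ hT ?_
  change IsIso (𝟙 (𝟙_ K) ▷ c)
  rw [id_whiskerRight]
  infer_instance

lemma aux_isZero_tensor_zero (c : K) : IsZero (c ⊗ (0 : K)) := by
  obtain ⟨h, hT⟩ := (hK c (contractibleTriangle (𝟙_ K)) (contractible_distinguished _)).1
  refine Pretriangulated.Triangle.isZero₃_of_isIso₁ _ hT ?_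
  change IsIso (c ◁ 𝟙 (𝟙_ K))
  rw [MonoidalCategory.whiskerLeft_id]
  infer_instance

lemma aux_zero_whiskerRight {P Q : K} (c : K) : (0 : P ⟶ Q) ▷ c = 0 := by
  have h0 : (0 : P ⟶ Q) = (0 : P ⟶ (0 : K)) ≫ (0 : (0 : K) ⟶ Q) := by simp
  rw [h0, comp_whiskerRight,
    (aux_isZero_zero_tensor hK c).eq_of_tgt ((0 : P ⟶ (0 : K)) ▷ c) 0, zero_comp]

omit hK

lemma aux_vanish_of_iso {A B : K} (g : A ⟶ B) {z w : K} (e : w ≅ z)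
    (h : g ▷ z = 0) : g ▷ w = 0 := by
  have h1 : (A ◁ e.hom) ≫ (g ▷ z) = (g ▷ w) ≫ (B ◁ e.hom) := whisker_exchange g e.hom
  have : (g ▷ w) ≫ (B ◁ e.hom) ≫ (B ◁ e.inv) = 0 := by
    rw [← Category.assoc, ← h1, h, comp_zero, zero_comp]
  simpa using this

include hK

lemma aux_vanish_tensor_right {A B : K} (g : A ⟶ B) {z : K}
    (h : g ▷ z = 0) (c : K) : g ▷ (z ⊗ c) = 0 := by
  have h1 : (g ▷ z) ▷ c ≫ (α_ B z c).hom = (α_ A z c).hom ≫ g ▷ (z ⊗ c) :=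
    associator_naturality_left g z c
  rw [h, aux_zero_whiskerRight hK, zero_comp] at h1
  exact (cancel_epi (α_ A z c).hom).1 (by rw [← h1, comp_zero])

lemma aux_vanish_tensor_left {A B : K} (g : A ⟶ B) {z : K}
    (h : g ▷ z = 0) (c : K) : g ▷ (c ⊗ z) = 0 :=
  aux_vanish_of_iso g (β_ c z) (aux_vanish_tensor_right hK g h c)

lemma aux_unit_shift_iso (w : K) :
    Nonempty (((𝟙_ K)⟦(1 : ℤ)⟧ ⊗ w) ≅ w⟦(1 : ℤ)⟧) := by
  have hT1 : (contractibleTriangle w).rotate ∈ distTriang K :=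
    rot_of_distTriang _ (contractible_distinguished w)
  have hS : (contractibleTriangle (𝟙_ K)).rotate ∈ distTriang K :=
    rot_of_distTriang _ (contractible_distinguished (𝟙_ K))
  obtain ⟨h, hT2⟩ := (hK w _ hS).2
  refine ⟨Pretriangulated.Triangle.π₃.mapIso
    (Pretriangulated.isoTriangleOfIso₁₂ _ _ hT2 hT1 (λ_ w)
      ((aux_isZero_zero_tensor hK w).iso (isZero_zero K)) ?_)⟩
  exact (isZero_zero K).eq_of_tgt _ _

lemma aux_unit_negshift_iso (w : K) :
    Nonempty (((𝟙_ K)⟦(-1 : ℤ)⟧ ⊗ w) ≅ w⟦(-1 : ℤ)⟧) := by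
  have hT1 : (contractibleTriangle (w⟦(-1 : ℤ)⟧)).rotate ∈ distTriang K :=
    rot_of_distTriang _ (contractible_distinguished _)
  have hS : (contractibleTriangle ((𝟙_ K)⟦(-1 : ℤ)⟧)).rotate ∈ distTriang K :=
    rot_of_distTriang _ (contractible_distinguished _)
  obtain ⟨h, hT2⟩ := (hK w _ hS).2
  set T2 := Triangle.mk ((contractibleTriangle ((𝟙_ K)⟦(-1 : ℤ)⟧)).rotate.mor₁ ▷ w)
    ((contractibleTriangle ((𝟙_ K)⟦(-1 : ℤ)⟧)).rotate.mor₂ ▷ w) h with hT2def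
  have hT2' : T2.rotate ∈ distTriang K := rot_of_distTriang _ hT2
  have hT1' : (contractibleTriangle (w⟦(-1 : ℤ)⟧)).rotate.rotate ∈ distTriang K :=
    rot_of_distTriang _ hT1
  -- isomorphism on the second objects of the rotated triangles
  have e₂ : (((𝟙_ K)⟦(-1 : ℤ)⟧)⟦(1 : ℤ)⟧ ⊗ w) ≅ (w⟦(-1 : ℤ)⟧)⟦(1 : ℤ)⟧ :=
    whiskerRightIso ((shiftFunctorCompIsoId K (-1 : ℤ) (1 : ℤ) (by ring)).app (𝟙_ K)) w ≪≫
      λ_ w ≪≫ ((shiftFunctorCompIsoId K (-1 : ℤ) (1 : ℤ) (by ring)).app w).symm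
  have etri := Pretriangulated.isoTriangleOfIso₁₂ _ _ hT2' hT1'
    ((aux_isZero_zero_tensor hK w).iso (isZero_zero K)) e₂
    ((aux_isZero_zero_tensor hK w).eq_of_src _ _)
  have e₃ : (((𝟙_ K)⟦(-1 : ℤ)⟧ ⊗ w)⟦(1 : ℤ)⟧) ≅ ((w⟦(-1 : ℤ)⟧)⟦(1 : ℤ)⟧) :=
    Pretriangulated.Triangle.π₃.mapIso etri
  exact ⟨(shiftFunctor K (1 : ℤ)).preimageIso e₃⟩

lemma aux_vanish_shift_one {A B : K} (g : A ⟶ B) {z : K}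
    (h : g ▷ z = 0) : g ▷ (z⟦(1 : ℤ)⟧) = 0 := by
  obtain ⟨e⟩ := aux_unit_shift_iso hK z
  exact aux_vanish_of_iso g e.symm (aux_vanish_tensor_left hK g h _)

lemma aux_vanish_shift_neg_one {A B : K} (g : A ⟶ B) {z : K}
    (h : g ▷ z = 0) : g ▷ (z⟦(-1 : ℤ)⟧) = 0 := by
  obtain ⟨e⟩ := aux_unit_negshift_iso hK z
  exact aux_vanish_of_iso g e.symm (aux_vanish_tensor_left hK g h _)

lemma aux_vanish_shift {A B : K} (g : A ⟶ B) {z : K}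
    (h : g ▷ z = 0) (n : ℤ) : g ▷ (z⟦n⟧) = 0 := by
  induction n using Int.induction_on with
  | zero => exact aux_vanish_of_iso g ((shiftFunctorZero K ℤ).app z) h
  | succ n ih =>
      exact aux_vanish_of_iso g ((shiftFunctorAdd K (n : ℤ) (1 : ℤ)).app z)
        (aux_vanish_shift_one hK g ih)
  | pred n ih =>
      exact aux_vanish_of_iso g
        ((shiftFunctorAdd' K (-(n : ℤ)) (-1 : ℤ) (-(n : ℤ) - 1) (by ring)).app z)
        (aux_vanish_shift_neg_one hK g ih)

lemma aux_vanish_succ {x y : K} (f : x ⟶ y) {z : K} {n : ℕ}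
    (h : mpow f n ▷ z = 0) : mpow f (n + 1) ▷ z = 0 := by
  show (mpow f n ⊗ₘ f) ▷ z = 0
  rw [MonoidalCategory.tensorHom_def, comp_whiskerRight]
  have h2 : (mpow f n ▷ x) ▷ z = 0 := by
    have h1 : mpow f n ▷ (x ⊗ z) = 0 := aux_vanish_tensor_left hK (mpow f n) h x
    have := associator_naturality_left (mpow f n) x z
    rw [h1, comp_zero] at this
    exact (cancel_mono (α_ (opow y n) x z).hom).1 (by rw [this, zero_comp])
  rw [h2, zero_comp]

lemma aux_vanish_mono {x y : K} (f : x ⟶ y) {z : K} {n : ℕ}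
    (h : mpow f n ▷ z = 0) {m : ℕ} (hm : n ≤ m) : mpow f m ▷ z = 0 := by
  induction m, hm using Nat.le_induction with
  | base => exact h
  | succ m _ ih => exact aux_vanish_succ hK f ih

omit hK

/-- `opow x (n + k) ≅ opow x n ⊗ opow x k`. -/
def auxOpowAdd (x : K) (n : ℕ) : ∀ k : ℕ, opow x (n + k) ≅ opow x n ⊗ opow x k
  | 0 => (ρ_ (opow x n)).symm
  | k + 1 => whiskerRightIso (auxOpowAdd x n k) x ≪≫ α_ (opow x n) (opow x k) x

lemma aux_mpow_add {x y : K} (f : x ⟶ y) (n k : ℕ) :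
    mpow f (n + k) ≫ (auxOpowAdd y n k).hom =
      (auxOpowAdd x n k).hom ≫ (mpow f n ⊗ₘ mpow f k) := by
  induction k with
  | zero =>
      show mpow f n ≫ (ρ_ _).inv = (ρ_ _).inv ≫ (mpow f n ⊗ₘ 𝟙 (𝟙_ K))
      rw [tensorHom_id, rightUnitor_inv_naturality]
  | succ k ih =>
      show (mpow f (n + k) ⊗ₘ f) ≫ ((auxOpowAdd y n k).hom ▷ y ≫ (α_ _ _ _).hom) =
        ((auxOpowAdd x n k).hom ▷ x ≫ (α_ _ _ _).hom) ≫ (mpow f n ⊗ₘ (mpow f k ⊗ₘ f))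
      have step1 : (mpow f (n + k) ⊗ₘ f) ≫ ((auxOpowAdd y n k).hom ▷ y) =
          ((auxOpowAdd x n k).hom ▷ x) ≫ ((mpow f n ⊗ₘ mpow f k) ⊗ₘ f) := by
        rw [← tensorHom_id, ← tensorHom_id, tensorHom_comp_tensorHom, tensorHom_comp_tensorHom, ih,
          Category.comp_id, Category.id_comp]
      rw [← Category.assoc, step1, Category.assoc, Category.assoc,
        associator_naturality]

include hK

/-- Key cone lemma: if `g` kills `T.obj₂` and `g'` kills `T.obj₁`, then
`g' ⊗ g` kills `T.obj₃`. -/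
lemma aux_cone_vanish {A B A' B' : K} (g : A ⟶ B) (g' : A' ⟶ B')
    (T : Triangle K) (hT : T ∈ distTriang K)
    (h1 : g' ▷ T.obj₁ = 0) (h2 : g ▷ T.obj₂ = 0) :
    (g' ⊗ₘ g) ▷ T.obj₃ = 0 := by
  obtain ⟨h, hTA⟩ := (hK A T hT).1
  set TA := Triangle.mk (A ◁ T.mor₁) (A ◁ T.mor₂) h with hTAdef
  -- `g ▷ T.obj₃` factors through `h`
  have hf : TA.mor₂ ≫ (g ▷ T.obj₃) = 0 := by
    show (A ◁ T.mor₂) ≫ (g ▷ T.obj₃) = 0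
    rw [whisker_exchange, h2, zero_comp]
  obtain ⟨t, ht⟩ := Pretriangulated.Triangle.yoneda_exact₃ TA hTA (g ▷ T.obj₃) hf
  -- now compute
  rw [MonoidalCategory.tensorHom_def, comp_whiskerRight]
  have hmid : (B' ◁ g) ▷ T.obj₃ =
      (α_ B' A T.obj₃).hom ≫ (B' ◁ (g ▷ T.obj₃)) ≫ (α_ B' B T.obj₃).inv := by
    rw [whisker_assoc_symm B' g T.obj₃]
    simp
  rw [hmid, ht]
  erw [MonoidalCategory.whiskerLeft_comp]
  have hvan : g' ▷ (TA.obj₁⟦(1 : ℤ)⟧) = 0 := by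
    show g' ▷ ((A ⊗ T.obj₁)⟦(1 : ℤ)⟧) = 0
    exact aux_vanish_shift hK g' (aux_vanish_tensor_left hK g' h1 A) 1
  simp only [Category.assoc]
  rw [associator_naturality_left_assoc g' A T.obj₃]
  erw [← whisker_exchange_assoc]
  rw [hvan]
  simp

end Aux

/-- **Proposition (Balmer).** Let `K` be a tt-category (not necessarily rigid) and
`f : x ⟶ y` a morphism. Then `{z ∈ K | f` is ⊗-nilpotent on `z}`, i.e.
`{z | f^⊗n ⊗ z = 0 for some n ≥ 1}`, is a tt-ideal of `K`; in particular it is closed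
under cones (this is the `cone_mem` field of `IsTTIdeal`). -/
theorem isTTIdeal_nilpotent_locus
    (hK : TensorExact K) {x y : K} (f : x ⟶ y) :
    IsTTIdeal {z : K | ∃ n : ℕ, 1 ≤ n ∧ mpow f n ▷ z = 0} := by
  constructor
  · -- zero_mem
    exact ⟨1, le_refl 1, (aux_isZero_tensor_zero hK (opow x 1)).eq_of_src _ 0⟩
  · -- shift_mem
    rintro n z ⟨m, hm, h⟩
    exact ⟨m, hm, aux_vanish_shift hK _ h n⟩
  · -- cone_mem
    rintro T hT ⟨n₁, hn₁, h₁⟩ ⟨n₂, hn₂, h₂⟩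
    have h₁' : mpow f (max n₁ n₂) ▷ T.obj₁ = 0 :=
      aux_vanish_mono hK f h₁ (le_max_left _ _)
    have h₂' : mpow f (max n₁ n₂) ▷ T.obj₂ = 0 :=
      aux_vanish_mono hK f h₂ (le_max_right _ _)
    refine ⟨max n₁ n₂ + max n₁ n₂, by omega, ?_⟩
    have key : (mpow f (max n₁ n₂) ⊗ₘ mpow f (max n₁ n₂)) ▷ T.obj₃ = 0 :=
      aux_cone_vanish hK _ _ T hT h₁' h₂'
    have hmp : mpow f (max n₁ n₂ + max n₁ n₂) =
        (auxOpowAdd x (max n₁ n₂) (max n₁ n₂)).hom ≫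
          (mpow f (max n₁ n₂) ⊗ₘ mpow f (max n₁ n₂)) ≫
          (auxOpowAdd y (max n₁ n₂) (max n₁ n₂)).inv := by
      rw [← Category.assoc, ← aux_mpow_add]
      simp
    rw [hmp, comp_whiskerRight, comp_whiskerRight, key, zero_comp, comp_zero]
  · -- retract_mem
    rintro w z ⟨n, hn, h⟩ i r hir
    refine ⟨n, hn, ?_⟩
    have h1 : (opow x n ◁ i) ≫ (mpow f n ▷ z) = (mpow f n ▷ w) ≫ (opow y n ◁ i) :=
      whisker_exchange _ i
    calc mpow f n ▷ w
        = (mpow f n ▷ w) ≫ (opow y n ◁ (i ≫ r)) := by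
          rw [hir, MonoidalCategory.whiskerLeft_id, Category.comp_id]
      _ = ((mpow f n ▷ w) ≫ (opow y n ◁ i)) ≫ (opow y n ◁ r) := by
          rw [MonoidalCategory.whiskerLeft_comp, Category.assoc]
      _ = ((opow x n ◁ i) ≫ (mpow f n ▷ z)) ≫ (opow y n ◁ r) := by rw [h1]
      _ = 0 := by rw [h, comp_zero, zero_comp]
  · -- tensor_mem
    rintro z ⟨n, hn, h⟩ c
    exact ⟨n, hn, aux_vanish_tensor_right hK _ h c⟩
  · -- tensor_mem'
    rintro z ⟨n, hn, h⟩ c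
    exact ⟨n, hn, aux_vanish_tensor_left hK _ h c⟩
end

section
/- Let K be a tt-category (not necessarily rigid) and let x ∈ K be a rigid object with dual x^∨, coevaluation η_x : 𝟙 → x^∨ ⊗ x and evaluation ε_x : x ⊗ x^∨ → 𝟙 satisfying (ε_x ⊗ x) ∘ (x ⊗ η_x) = 1_x. Let ξ_x : w_x → 𝟙 be a homotopy fiber of η_x, i.e. part of a distinguished triangle w_x →ξ_x→ 𝟙 →η_x→ x^∨ ⊗ x → Σw_x. Then x ⊗ ξ_x = 0, and consequently ξ_x ⊗ cone(ξ_x) = 0 (where cone(ξ_x) ≅ x^∨ ⊗ x). -/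
/-!
Basic notions of tensor-triangular geometry (Balmer), formalized from scratch:
tt-categories (pretriangulated + monoidal, with tensor exact in each variable),
tt-ideals, prime tt-ideals, the Balmer spectrum `Spc` with its topology,
tensor powers of objects and morphisms, rigidity.
-/

open CategoryTheory Category Limits ZeroObject Pretriangulated MonoidalCategory

universe v u v' u'

open TT

variable {K : Type u} [Category.{v} K] [HasZeroObject K] [Preadditive K]
  [HasShift K ℤ] [∀ n : ℤ, (shiftFunctor K n).Additive] [Pretriangulated K]
  [MonoidalCategory K] [SymmetricCategory K] [EssentiallySmall.{v} K]

lemma tensorZero_isZero {K : Type u} [Category.{v} K] [HasZeroObject K] [Preadditive K]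
    [HasShift K ℤ] [∀ n : ℤ, (shiftFunctor K n).Additive] [Pretriangulated K]
    [MonoidalCategory K] (hK : TensorExact K) (c : K) : IsZero (c ⊗ (0 : K)) := by
  obtain ⟨⟨h, hT⟩, -⟩ := hK c (contractibleTriangle (𝟙_ K)) (contractible_distinguished _)
  refine Triangle.isZero₃_of_isIso₁ _ hT ?_
  dsimp [contractibleTriangle]
  change IsIso (c ◁ 𝟙 (𝟙_ K))
  rw [MonoidalCategory.whiskerLeft_id]
  infer_instance

lemma whiskerLeft_zero' {K : Type u} [Category.{v} K] [HasZeroObject K] [Preadditive K]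
    [HasShift K ℤ] [∀ n : ℤ, (shiftFunctor K n).Additive] [Pretriangulated K]
    [MonoidalCategory K] (hK : TensorExact K) (c a b : K) : c ◁ (0 : a ⟶ b) = 0 := by
  have : (0 : a ⟶ b) = (0 : a ⟶ (0 : K)) ≫ (0 : (0 : K) ⟶ b) := by simp
  rw [this, MonoidalCategory.whiskerLeft_comp,
    (tensorZero_isZero hK c).eq_of_src (c ◁ (0 : (0:K) ⟶ b)) 0, comp_zero]

/-- **Lemma (Balmer).** Let `K` be a tt-category (not necessarily rigid) and `x` a rigid
object with dual `xd`, coevaluation `η : 𝟙 ⟶ xd ⊗ x` and evaluation `ε : x ⊗ xd ⟶ 𝟙`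
satisfying `(ε ⊗ x) ∘ (x ⊗ η) = 1ₓ`. Let `ξ : w ⟶ 𝟙` be a homotopy fiber of `η`, i.e.
part of a distinguished triangle `w ⟶ 𝟙 ⟶ xd ⊗ x ⟶ Σw`. Then `x ⊗ ξ = 0` and
consequently `ξ ⊗ cone(ξ) = 0`, where `cone(ξ) = xd ⊗ x`. -/
theorem whiskerLeft_fiber_of_coevaluation_eq_zero
    (hK : TensorExact K) (x xd : K) (η : 𝟙_ K ⟶ xd ⊗ x) (ε : x ⊗ xd ⟶ 𝟙_ K)
    (hdual : (ρ_ x).inv ≫ (x ◁ η) ≫ (α_ x xd x).inv ≫ (ε ▷ x) ≫ (λ_ x).hom = 𝟙 x)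
    (w : K) (ξ : w ⟶ 𝟙_ K) (ζ : xd ⊗ x ⟶ w⟦(1:ℤ)⟧)
    (htri : Triangle.mk ξ η ζ ∈ distTriang K) :
    x ◁ ξ = 0 ∧ ξ ▷ (xd ⊗ x) = 0 := by
  have h1 : ξ ≫ η = 0 := comp_distTriang_mor_zero₁₂ _ htri
  have key : (x ◁ η) ≫ (α_ x xd x).inv ≫ (ε ▷ x) ≫ (λ_ x).hom = (ρ_ x).hom := by
    rw [Iso.inv_comp_eq] at hdual
    rw [hdual, comp_id]
  have hx : x ◁ ξ = 0 := by
    rw [← cancel_mono (ρ_ x).hom, zero_comp, ← key, ← Category.assoc,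
      ← MonoidalCategory.whiskerLeft_comp, h1, whiskerLeft_zero' hK, zero_comp]
  have hy : (xd ⊗ x) ◁ ξ = 0 := by
    rw [tensor_whiskerLeft, hx, whiskerLeft_zero' hK, zero_comp, comp_zero]
  refine ⟨hx, ?_⟩
  have := BraidedCategory.braiding_naturality_left ξ (xd ⊗ x)
  rw [hy, comp_zero] at this
  rw [← cancel_mono (β_ (𝟙_ K) (xd ⊗ x)).hom, zero_comp, this]
end
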